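/- arXiv:1509.05306 — 2 statements merged into one kernel-verified Lean document; each statement's English description precedes it below -/
import Mathlib

section
/- Assume the field hypotheses (weights not needed) and suppose that 1 ∈ [a, b]. Then for any real number λ and any α ∈ [−1, 1], (∫_Ω A_t^{λ+α} dμ(t)) ⊗_s (∫_Ω A_t^{λ−α} dμ(t)) ≤ ((a² + b²)/(2ab)) · (∫_Ω A_t^{λ} dμ(t))^{⊗2}, where real powers of the positive definite matrices A_t are defined by the functional calculus. -/
open Matrix MeasureTheory
open scoped Kronecker ComplexOrder

attribute [local instance] Matrix.frobeniusNormedAddCommGroup Matrix.frobeniusNormedSpace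

/-- Symmetrized Kronecker tensor product: `X ⊗ₛ Y = (1/2)(X ⊗ Y + Y ⊗ X)`. -/
noncomputable def symKron {k : ℕ} (X Y : Matrix (Fin k) (Fin k) ℂ) :
    Matrix (Fin k × Fin k) (Fin k × Fin k) ℂ :=
  ((1 : ℂ) / 2) • (X ⊗ₖ Y + Y ⊗ₖ X)

/-! ### Auxiliary scalar lemmas -/

private lemma aux_rpow_mem (a b t α : ℝ) (ha : 0 < a) (hab : a ≤ b) (ht1 : a/b ≤ t) (ht2 : t ≤ b/a)
    (hα : α ∈ Set.Icc (-1:ℝ) 1) : a/b ≤ t ^ α ∧ t ^ α ≤ b/a := by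
  have hb : 0 < b := ha.trans_le hab
  have ht : 0 < t := lt_of_lt_of_le (div_pos ha hb) ht1
  obtain ⟨hα1, hα2⟩ := hα
  rcases le_total 1 t with h | h
  · constructor
    · calc a/b ≤ t⁻¹ := by
            rw [le_inv_comm₀ (div_pos ha hb) ht]
            rwa [inv_div]
          _ = t ^ (-1:ℝ) := by rw [Real.rpow_neg_one]
          _ ≤ t ^ α := Real.rpow_le_rpow_of_exponent_le h hα1
    · calc t ^ α ≤ t ^ (1:ℝ) := Real.rpow_le_rpow_of_exponent_le h hα2
          _ = t := Real.rpow_one t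
          _ ≤ b/a := ht2
  · constructor
    · calc a/b ≤ t := ht1
          _ = t ^ (1:ℝ) := (Real.rpow_one t).symm
          _ ≤ t ^ α := Real.rpow_le_rpow_of_exponent_ge ht h hα2
    · calc t ^ α ≤ t ^ (-1:ℝ) := Real.rpow_le_rpow_of_exponent_ge ht h hα1
          _ = t⁻¹ := Real.rpow_neg_one t
          _ ≤ b/a := by
            rw [inv_le_comm₀ ht (div_pos hb ha)]
            rwa [inv_div]

private lemma aux_scalar_ineq (a b x y l α : ℝ) (ha : 0 < a) (hab : a ≤ b)
    (hx : x ∈ Set.Icc a b) (hy : y ∈ Set.Icc a b) (hα : α ∈ Set.Icc (-1:ℝ) 1) :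
    x ^ (l+α) * y ^ (l-α) + x ^ (l-α) * y ^ (l+α)
      ≤ ((a^2+b^2)/(a*b)) * (x ^ l * y ^ l) := by
  have hb : 0 < b := ha.trans_le hab
  have hx0 : 0 < x := ha.trans_le hx.1
  have hy0 : 0 < y := ha.trans_le hy.1
  have ht1 : a/b ≤ x/y := by
    rw [div_le_div_iff₀ hb hy0]
    nlinarith [hx.1, hy.2]
  have ht2 : x/y ≤ b/a := by
    rw [div_le_div_iff₀ hy0 ha]
    nlinarith [hx.2, hy.1]
  obtain ⟨hu1, hu2⟩ := aux_rpow_mem a b (x/y) α ha hab ht1 ht2 hα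
  set u := (x/y) ^ α with hu
  have hu0 : 0 < u := Real.rpow_pos_of_pos (div_pos hx0 hy0) α
  have key : u + u⁻¹ ≤ b/a + a/b := by
    have h1 : (b/a - u) * (u - a/b) ≥ 0 := mul_nonneg (by linarith) (by linarith)
    have h2 : u * u⁻¹ = 1 := mul_inv_cancel₀ hu0.ne'
    have hba : (b/a) * (a/b) = 1 := by field_simp
    nlinarith [hu0]
  have hudef : u = x ^ α / y ^ α := by rw [hu, Real.div_rpow hx0.le hy0.le]
  have huinv : u⁻¹ = y ^ α / x ^ α := by rw [hudef, inv_div]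
  have e1 : x ^ (l+α) * y ^ (l-α) = (x ^ l * y ^ l) * u := by
    rw [Real.rpow_add hx0, Real.rpow_sub hy0, hudef]
    field_simp
  have e2 : x ^ (l-α) * y ^ (l+α) = (x ^ l * y ^ l) * u⁻¹ := by
    rw [Real.rpow_sub hx0, Real.rpow_add hy0, huinv]
    field_simp
  have hxl : 0 < x ^ l * y ^ l :=
    mul_pos (Real.rpow_pos_of_pos hx0 l) (Real.rpow_pos_of_pos hy0 l)
  have hres : (a^2+b^2)/(a*b) = b/a + a/b := by field_simp; ring
  rw [e1, e2, hres, ← mul_add, mul_comm (x ^ l * y ^ l) _]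
  exact mul_le_mul_of_nonneg_right key hxl.le

private lemma aux_rpow_bound (a b r : ℝ) (ha : 0 < a) (hab : a ≤ b) {x : ℝ}
    (hx : x ∈ Set.Icc a b) :
    |x ^ r| ≤ Real.exp (|r| * (|Real.log a| + |Real.log b|)) := by
  have hx0 : 0 < x := ha.trans_le hx.1
  rw [abs_of_pos (Real.rpow_pos_of_pos hx0 r), Real.rpow_def_of_pos hx0]
  apply Real.exp_le_exp.mpr
  have h1 : Real.log a ≤ Real.log x := Real.log_le_log ha hx.1
  have h2 : Real.log x ≤ Real.log b := Real.log_le_log hx0 hx.2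
  have hlx : |Real.log x| ≤ |Real.log a| + |Real.log b| := by
    rw [abs_le]
    constructor
    · have := neg_abs_le (Real.log a)
      have := abs_nonneg (Real.log b)
      linarith
    · have := le_abs_self (Real.log b)
      have := abs_nonneg (Real.log a)
      linarith
  calc Real.log x * r ≤ |Real.log x * r| := le_abs_self _
    _ = |Real.log x| * |r| := abs_mul _ _
    _ ≤ (|Real.log a| + |Real.log b|) * |r| := mul_le_mul_of_nonneg_right hlx (abs_nonneg r)
    _ = |r| * (|Real.log a| + |Real.log b|) := mul_comm _ _

/-! ### Eigenvalue bounds -/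

private lemma aux_star_dot_self_eigen {k : ℕ} {M : Matrix (Fin k) (Fin k) ℂ}
    (hM : M.IsHermitian) (i : Fin k) :
    star ⇑(hM.eigenvectorBasis i) ⬝ᵥ ⇑(hM.eigenvectorBasis i) = 1 := by
  have h := EuclideanSpace.inner_eq_star_dotProduct (hM.eigenvectorBasis i) (hM.eigenvectorBasis i)
  rw [inner_self_eq_norm_sq_to_K, hM.eigenvectorBasis.orthonormal.1 i] at h
  rw [dotProduct_comm]
  simpa using h.symm

private lemma aux_eig_lower {k : ℕ} (a : ℝ) {M : Matrix (Fin k) (Fin k) ℂ} (hM : M.IsHermitian)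
    (h : (M - a • 1).PosSemidef) (i : Fin k) : a ≤ hM.eigenvalues i := by
  set x := ⇑(hM.eigenvectorBasis i) with hx
  have h2 := h.dotProduct_mulVec_nonneg x
  rw [sub_mulVec, hM.mulVec_eigenvectorBasis i, smul_mulVec, one_mulVec,
    dotProduct_sub, dotProduct_smul, dotProduct_smul, ← hx, aux_star_dot_self_eigen hM i] at h2
  have : (0:ℂ) ≤ ((hM.eigenvalues i - a : ℝ) : ℂ) := by
    push_cast
    convert h2 using 1
    simp [Complex.real_smul]
  rw [Complex.zero_le_real] at this
  linarith

private lemma aux_eig_upper {k : ℕ} (b : ℝ) {M : Matrix (Fin k) (Fin k) ℂ} (hM : M.IsHermitian)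
    (h : ((b • 1 : Matrix (Fin k) (Fin k) ℂ) - M).PosSemidef) (i : Fin k) :
    hM.eigenvalues i ≤ b := by
  set x := ⇑(hM.eigenvectorBasis i) with hx
  have h2 := h.dotProduct_mulVec_nonneg x
  rw [sub_mulVec, hM.mulVec_eigenvectorBasis i, smul_mulVec, one_mulVec,
    dotProduct_sub, dotProduct_smul, dotProduct_smul, ← hx, aux_star_dot_self_eigen hM i] at h2
  have : (0:ℂ) ≤ ((b - hM.eigenvalues i : ℝ) : ℂ) := by
    push_cast
    convert h2 using 1
    simp [Complex.real_smul]
  rw [Complex.zero_le_real] at this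
  linarith

/-! ### Pointwise two-matrix inequality -/

private lemma aux_kron_star {k : ℕ} (X Y : Matrix (Fin k) (Fin k) ℂ) :
    star (X ⊗ₖ Y) = star X ⊗ₖ star Y := by
  ext ⟨i, j⟩ ⟨p, q⟩
  simp [star_eq_conjTranspose, conjTranspose_apply, mul_comm]

private lemma aux_cfc_kron {k : ℕ} {P Q : Matrix (Fin k) (Fin k) ℂ} (hP : P.IsHermitian)
    (hQ : Q.IsHermitian) (f g : ℝ → ℝ) :
    cfc f P ⊗ₖ cfc g Q =
      ((hP.eigenvectorUnitary : Matrix (Fin k) (Fin k) ℂ) ⊗ₖ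
          (hQ.eigenvectorUnitary : Matrix (Fin k) (Fin k) ℂ)) *
        diagonal (fun p : Fin k × Fin k =>
          ((f (hP.eigenvalues p.1) * g (hQ.eigenvalues p.2) : ℝ) : ℂ)) *
        star ((hP.eigenvectorUnitary : Matrix (Fin k) (Fin k) ℂ) ⊗ₖ
          (hQ.eigenvectorUnitary : Matrix (Fin k) (Fin k) ℂ)) := by
  rw [hP.cfc_eq f, hQ.cfc_eq g, Matrix.IsHermitian.cfc, Matrix.IsHermitian.cfc,
    Unitary.conjStarAlgAut_apply, Unitary.conjStarAlgAut_apply,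
    Matrix.mul_kronecker_mul, Matrix.mul_kronecker_mul, diagonal_kronecker_diagonal,
    aux_kron_star]
  congr 1
  congr 1
  ext p
  simp

private lemma aux_pointwise_psd {k : ℕ} (a b l α : ℝ) (ha : 0 < a) (hab : a ≤ b)
    (hα : α ∈ Set.Icc (-1:ℝ) 1)
    {P Q : Matrix (Fin k) (Fin k) ℂ} (hP : P.IsHermitian) (hQ : Q.IsHermitian)
    (hPe : ∀ i, hP.eigenvalues i ∈ Set.Icc a b) (hQe : ∀ i, hQ.eigenvalues i ∈ Set.Icc a b) :
    (((a ^ 2 + b ^ 2) / (2 * a * b)) •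
        (cfc (fun x : ℝ => x ^ l) P ⊗ₖ cfc (fun x : ℝ => x ^ l) Q)
      - ((1:ℂ)/2) • (cfc (fun x : ℝ => x ^ (l+α)) P ⊗ₖ cfc (fun x : ℝ => x ^ (l-α)) Q
          + cfc (fun x : ℝ => x ^ (l-α)) P ⊗ₖ cfc (fun x : ℝ => x ^ (l+α)) Q)).PosSemidef := by
  set K : ℝ := (a^2+b^2)/(2*a*b) with hK
  set W : Matrix (Fin k × Fin k) (Fin k × Fin k) ℂ :=
    (hP.eigenvectorUnitary : Matrix (Fin k) (Fin k) ℂ) ⊗ₖ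
      (hQ.eigenvectorUnitary : Matrix (Fin k) (Fin k) ℂ) with hW
  set d : Fin k × Fin k → ℂ := fun p =>
    ((K * (hP.eigenvalues p.1 ^ l * hQ.eigenvalues p.2 ^ l)
      - (1/2) * (hP.eigenvalues p.1 ^ (l+α) * hQ.eigenvalues p.2 ^ (l-α)
          + hP.eigenvalues p.1 ^ (l-α) * hQ.eigenvalues p.2 ^ (l+α)) : ℝ) : ℂ) with hd
  have key : (K •
        (cfc (fun x : ℝ => x ^ l) P ⊗ₖ cfc (fun x : ℝ => x ^ l) Q)
      - ((1:ℂ)/2) • (cfc (fun x : ℝ => x ^ (l+α)) P ⊗ₖ cfc (fun x : ℝ => x ^ (l-α)) Q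
          + cfc (fun x : ℝ => x ^ (l-α)) P ⊗ₖ cfc (fun x : ℝ => x ^ (l+α)) Q))
      = W * diagonal d * star W := by
    rw [aux_cfc_kron hP hQ, aux_cfc_kron hP hQ, aux_cfc_kron hP hQ, ← hW]
    have hdiag : diagonal d =
        K • diagonal (fun p : Fin k × Fin k =>
            ((hP.eigenvalues p.1 ^ l * hQ.eigenvalues p.2 ^ l : ℝ) : ℂ))
        - ((1:ℂ)/2) • (diagonal (fun p : Fin k × Fin k =>
            ((hP.eigenvalues p.1 ^ (l+α) * hQ.eigenvalues p.2 ^ (l-α) : ℝ) : ℂ))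
          + diagonal (fun p : Fin k × Fin k =>
            ((hP.eigenvalues p.1 ^ (l-α) * hQ.eigenvalues p.2 ^ (l+α) : ℝ) : ℂ))) := by
      ext pq rs
      by_cases hpq : pq = rs
      · subst hpq
        simp only [diagonal_apply_eq, Matrix.sub_apply, Matrix.smul_apply, Matrix.add_apply, hd,
          Complex.real_smul, smul_eq_mul]
        push_cast
        ring
      · simp [diagonal_apply_ne _ hpq]
    rw [hdiag]
    simp only [sub_mul, mul_sub, add_mul, mul_add, smul_mul_assoc, mul_smul_comm]
  rw [key]
  apply Matrix.PosSemidef.mul_mul_conjTranspose_same ?_ W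
  refine Matrix.posSemidef_diagonal_iff.mpr fun p => ?_
  rw [hd, Complex.zero_le_real]
  have h := aux_scalar_ineq a b (hP.eigenvalues p.1) (hQ.eigenvalues p.2) l α ha hab
    (hPe p.1) (hQe p.2) hα
  have hab2 : (a^2+b^2)/(a*b) = 2 * K := by
    rw [hK]; field_simp
  rw [hab2] at h
  linarith

/-! ### Measurability and integrability -/

private noncomputable def auxCENorm {m n : Type*} [Fintype m] [Fintype n] :
    ENormedAddCommMonoid (Matrix m n ℂ) :=
  NormedAddCommGroup.toENormedAddCommMonoid

attribute [local instance] auxCENorm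

private lemma auxCAdd {m n : Type*} [Fintype m] [Fintype n] :
    @ContinuousAdd (Matrix m n ℂ) _ (auxCENorm (m := m) (n := n)).toAdd :=
  inferInstanceAs (ContinuousAdd (Matrix m n ℂ))

attribute [local instance] auxCAdd

private noncomputable def auxPMS {m n : Type*} [Fintype m] [Fintype n] :
    TopologicalSpace.PseudoMetrizableSpace (Matrix m n ℂ) :=
  inferInstanceAs (TopologicalSpace.PseudoMetrizableSpace (m → n → ℂ))

attribute [local instance] auxPMS

private lemma aux_aesm_cfc {k : ℕ} {Ω : Type*} [MeasurableSpace Ω] {μ : Measure Ω}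
    (a b : ℝ)
    {A : Ω → Matrix (Fin k) (Fin k) ℂ} (hAmeas : AEStronglyMeasurable A μ)
    (hAherm : ∀ t, (A t).IsHermitian)
    (heig : ∀ t i, (hAherm t).eigenvalues i ∈ Set.Icc a b)
    (f : ℝ → ℝ) (hf : ContinuousOn f (Set.Icc a b)) :
    AEStronglyMeasurable (fun t => cfc f (A t)) μ := by
  have hex : ∀ n : ℕ, ∃ p : Polynomial ℝ, ∀ x ∈ Set.Icc a b, |p.eval x - f x| < 1/(n+1) :=
    fun n => exists_polynomial_near_of_continuousOn a b f hf (1/(n+1)) (by positivity)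
  choose p hp using hex
  apply aestronglyMeasurable_of_tendsto_ae Filter.atTop
    (f := fun n t => Polynomial.aeval (A t) (p n))
  · intro n
    exact ((p n).continuous_aeval).comp_aestronglyMeasurable hAmeas
  · filter_upwards with t
    have hcfceq : ∀ g : ℝ → ℝ, cfc g (A t) = (hAherm t).cfc g := fun g => (hAherm t).cfc_eq g
    have h1 : ∀ n, Polynomial.aeval (A t) (p n) = (hAherm t).cfc (fun x => (p n).eval x) := by
      intro n
      rw [← hcfceq, ← cfc_polynomial (p n) (A t) (hAherm t)]
      rfl
    simp only [h1, hcfceq, Matrix.IsHermitian.cfc, Unitary.conjStarAlgAut_apply]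
    set U : Matrix (Fin k) (Fin k) ℂ :=
      ((hAherm t).eigenvectorUnitary : Matrix (Fin k) (Fin k) ℂ)
    have hcont : Continuous (fun v : Fin k → ℝ =>
        U * diagonal (fun i => (RCLike.ofReal (v i) : ℂ)) * star U) := by
      apply Continuous.matrix_mul ?_ continuous_const
      apply Continuous.matrix_mul continuous_const
      exact (continuous_pi fun i =>
        RCLike.continuous_ofReal.comp (continuous_apply i)).matrix_diagonal
    have hv : Filter.Tendsto (fun n => (fun i => (p n).eval ((hAherm t).eigenvalues i)))
        Filter.atTop (nhds (fun i => f ((hAherm t).eigenvalues i))) := by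
      rw [tendsto_pi_nhds]
      intro i
      rw [tendsto_iff_dist_tendsto_zero]
      apply squeeze_zero (fun n => dist_nonneg) (g := fun n : ℕ => 1/(n+1))
      · intro n
        rw [Real.dist_eq]
        exact (hp n _ (heig t i)).le
      · exact tendsto_one_div_add_atTop_nhds_zero_nat
    have := (hcont.tendsto _).comp hv
    convert this using 2
    all_goals rfl

private lemma aux_norm_cfc_le {k : ℕ} {M : Matrix (Fin k) (Fin k) ℂ} (hM : M.IsHermitian)
    (f : ℝ → ℝ) (C : ℝ) (hC : 0 ≤ C)
    (h : ∀ i, |f (hM.eigenvalues i)| ≤ C) : ‖cfc f M‖ ≤ k * (k * C) := by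
  rw [hM.cfc_eq, Matrix.IsHermitian.cfc]
  set U : Matrix (Fin k) (Fin k) ℂ := (hM.eigenvectorUnitary : Matrix (Fin k) (Fin k) ℂ) with hU
  set d : Fin k → ℂ := RCLike.ofReal ∘ f ∘ hM.eigenvalues with hd
  have hdC : ∀ m, ‖d m‖ ≤ C := by
    intro m
    rw [hd]
    simp only [Function.comp_apply]
    rw [RCLike.norm_ofReal]
    exact h m
  have hUe : ∀ i m, ‖U i m‖ ≤ 1 := fun i m =>
    entry_norm_bound_of_unitary hM.eigenvectorUnitary.2 i m
  have hentry : ∀ i j, ‖(U * diagonal d * star U) i j‖ ≤ k * C := by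
    intro i j
    rw [Matrix.mul_apply]
    refine (norm_sum_le _ _).trans ?_
    have hterm : ∀ m : Fin k, ‖(U * diagonal d) i m * star U m j‖ ≤ C := by
      intro m
      rw [Matrix.mul_diagonal, Matrix.star_apply, norm_mul, norm_mul, norm_star]
      calc ‖U i m‖ * ‖d m‖ * ‖U j m‖ ≤ 1 * C * 1 := by
            apply mul_le_mul (mul_le_mul (hUe i m) (hdC m) (norm_nonneg _) zero_le_one)
              (hUe j m) (norm_nonneg _)
            positivity
        _ = C := by ring
    calc ∑ m : Fin k, ‖(U * diagonal d) i m * star U m j‖ ≤ ∑ _m : Fin k, C :=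
          Finset.sum_le_sum fun m _ => hterm m
      _ = k * C := by simp [Finset.sum_const, Finset.card_univ]
  rw [Matrix.frobenius_norm_def]
  have hkC : (0:ℝ) ≤ k * C := by positivity
  calc (∑ i, ∑ j, ‖(U * diagonal d * star U) i j‖ ^ (2:ℝ)) ^ (1/2 : ℝ)
      ≤ (∑ i : Fin k, ∑ j : Fin k, ((k:ℝ)*C) ^ (2:ℝ)) ^ (1/2 : ℝ) := by
        apply Real.rpow_le_rpow (by positivity) ?_ (by norm_num)
        apply Finset.sum_le_sum; intro i _
        apply Finset.sum_le_sum; intro j _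
        exact Real.rpow_le_rpow (norm_nonneg _) (hentry i j) (by norm_num)
    _ = (((k:ℝ) * (k * C)) ^ (2:ℝ)) ^ (1/2 : ℝ) := by
        congr 1
        rw [Real.mul_rpow (by positivity) hkC]
        have hk2 : (k:ℝ) ^ (2:ℝ) = (k:ℝ) * (k:ℝ) := by
          rw [show (2:ℝ) = ((2:ℕ):ℝ) by norm_num, Real.rpow_natCast]
          ring
        simp only [Finset.sum_const, Finset.card_univ, Fintype.card_fin, nsmul_eq_mul, hk2]
        ring
    _ = k * (k * C) := by
        rw [← Real.rpow_mul (by positivity)]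
        norm_num

private lemma aux_integrable_cfc_rpow {k : ℕ} {Ω : Type*} [MeasurableSpace Ω]
    {μ : Measure Ω} [IsFiniteMeasure μ] (a b r : ℝ) (ha : 0 < a) (hab : a ≤ b)
    {A : Ω → Matrix (Fin k) (Fin k) ℂ} (hAmeas : AEStronglyMeasurable A μ)
    (hAherm : ∀ t, (A t).IsHermitian)
    (heig : ∀ t i, (hAherm t).eigenvalues i ∈ Set.Icc a b) :
    Integrable (fun t => cfc (fun x : ℝ => x ^ r) (A t)) μ := by
  have hcont : ContinuousOn (fun x : ℝ => x ^ r) (Set.Icc a b) := by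
    intro x hx
    exact (Real.continuousAt_rpow_const x r
      (Or.inl (ne_of_gt (lt_of_lt_of_le ha hx.1)))).continuousWithinAt
  have hmeas := aux_aesm_cfc a b hAmeas hAherm heig _ hcont
  set C := Real.exp (|r| * (|Real.log a| + |Real.log b|)) with hCdef
  apply Integrable.mono' (integrable_const ((k:ℝ) * ((k:ℝ) * C))) hmeas
  filter_upwards with t
  exact aux_norm_cfc_le (hAherm t) _ C (Real.exp_nonneg _)
    (fun i => aux_rpow_bound a b r ha hab (heig t i))

/-! ### Integral infrastructure -/

/-- quadratic form CLM -/
private noncomputable def auxQform {m : Type*} [Fintype m] (x : m → ℂ) :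
    Matrix m m ℂ →L[ℂ] ℂ :=
  LinearMap.toContinuousLinearMap
    { toFun := fun M => star x ⬝ᵥ M *ᵥ x
      map_add' := fun M N => by rw [Matrix.add_mulVec, dotProduct_add]
      map_smul' := fun c M => by
        rw [RingHom.id_apply, Matrix.smul_mulVec, dotProduct_smul, smul_eq_mul] }

private lemma auxQform_apply {m : Type*} [Fintype m] (x : m → ℂ) (M : Matrix m m ℂ) :
    auxQform x M = star x ⬝ᵥ M *ᵥ x := rfl

/-- conjTranspose as a real-linear isometry -/
private noncomputable def auxCtLI {m : Type*} [Fintype m] :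
    Matrix m m ℂ →ₗᵢ[ℝ] Matrix m m ℂ where
  toLinearMap :=
    { toFun := fun M => Mᴴ
      map_add' := fun M N => Matrix.conjTranspose_add M N
      map_smul' := fun c M => by
        rw [RingHom.id_apply, Matrix.conjTranspose_smul, star_trivial] }
  norm_map' := fun M => Matrix.frobenius_norm_conjTranspose M

private lemma aux_integral_conjTranspose {m : Type*} [Fintype m] {Ω : Type*} [MeasurableSpace Ω]
    {μ : Measure Ω} {F : Ω → Matrix m m ℂ} :
    (∫ t, F t ∂μ)ᴴ = ∫ t, (F t)ᴴ ∂μ :=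
  ((auxCtLI (m := m)).integral_comp_comm F (μ := μ)).symm

private lemma aux_posSemidef_integral {m : Type*} [Fintype m] {Ω : Type*} [MeasurableSpace Ω]
    {μ : Measure Ω} {F : Ω → Matrix m m ℂ} (hF : Integrable F μ)
    (h : ∀ t, (F t).PosSemidef) : (∫ t, F t ∂μ).PosSemidef := by
  refine Matrix.PosSemidef.of_dotProduct_mulVec_nonneg ?_ ?_
  · show _ = _
    rw [aux_integral_conjTranspose]
    exact integral_congr_ae (Filter.Eventually.of_forall fun t => (h t).1)
  · intro x
    have hcomp : star x ⬝ᵥ (∫ t, F t ∂μ) *ᵥ x = ∫ t, star x ⬝ᵥ (F t) *ᵥ x ∂μ := by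
      rw [← auxQform_apply]
      exact ((auxQform x).integral_comp_comm hF).symm
    rw [hcomp]
    have hint : Integrable (fun t => star x ⬝ᵥ (F t) *ᵥ x) μ := (auxQform x).integrable_comp hF
    rw [Complex.nonneg_iff]
    constructor
    · rw [← RCLike.re_to_complex, ← integral_re hint]
      apply integral_nonneg
      intro t
      have h2 := (h t).dotProduct_mulVec_nonneg x
      rw [Complex.nonneg_iff] at h2
      simpa using h2.1
    · rw [← RCLike.im_to_complex, ← integral_im hint]
      symm
      apply integral_eq_zero_of_ae
      filter_upwards with t
      have h2 := (h t).dotProduct_mulVec_nonneg x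
      rw [Complex.nonneg_iff] at h2
      simpa using h2.2.symm

section kronCLM
variable {k : ℕ}

/-- right Kronecker multiplication CLM : `M ↦ M ⊗ₖ C` -/
private noncomputable def auxKronR (C : Matrix (Fin k) (Fin k) ℂ) :
    Matrix (Fin k) (Fin k) ℂ →L[ℂ] Matrix (Fin k × Fin k) (Fin k × Fin k) ℂ :=
  LinearMap.toContinuousLinearMap
    { toFun := fun M => M ⊗ₖ C
      map_add' := fun M N => Matrix.add_kronecker M N C
      map_smul' := fun c M => by
        rw [RingHom.id_apply, Matrix.smul_kronecker] }

/-- left Kronecker multiplication CLM : `M ↦ C ⊗ₖ M` -/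
private noncomputable def auxKronL (C : Matrix (Fin k) (Fin k) ℂ) :
    Matrix (Fin k) (Fin k) ℂ →L[ℂ] Matrix (Fin k × Fin k) (Fin k × Fin k) ℂ :=
  LinearMap.toContinuousLinearMap
    { toFun := fun M => C ⊗ₖ M
      map_add' := fun M N => Matrix.kronecker_add C M N
      map_smul' := fun c M => by
        rw [RingHom.id_apply, Matrix.kronecker_smul] }

private lemma aux_integral_kronR {Ω : Type*} [MeasurableSpace Ω] {μ : Measure Ω}
    {F : Ω → Matrix (Fin k) (Fin k) ℂ} (hF : Integrable F μ) (C : Matrix (Fin k) (Fin k) ℂ) :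
    ∫ t, F t ⊗ₖ C ∂μ = (∫ t, F t ∂μ) ⊗ₖ C :=
  ((auxKronR C).integral_comp_comm hF)

private lemma aux_integral_kronL {Ω : Type*} [MeasurableSpace Ω] {μ : Measure Ω}
    {F : Ω → Matrix (Fin k) (Fin k) ℂ} (hF : Integrable F μ) (C : Matrix (Fin k) (Fin k) ℂ) :
    ∫ t, C ⊗ₖ F t ∂μ = C ⊗ₖ (∫ t, F t ∂μ) :=
  ((auxKronL C).integral_comp_comm hF)

private lemma aux_integrable_kronR {Ω : Type*} [MeasurableSpace Ω] {μ : Measure Ω}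
    {F : Ω → Matrix (Fin k) (Fin k) ℂ} (hF : Integrable F μ) (C : Matrix (Fin k) (Fin k) ℂ) :
    Integrable (fun t => F t ⊗ₖ C) μ :=
  (auxKronR C).integrable_comp hF

private lemma aux_integrable_kronL {Ω : Type*} [MeasurableSpace Ω] {μ : Measure Ω}
    {F : Ω → Matrix (Fin k) (Fin k) ℂ} (hF : Integrable F μ) (C : Matrix (Fin k) (Fin k) ℂ) :
    Integrable (fun t => C ⊗ₖ F t) μ :=
  (auxKronL C).integrable_comp hF

end kronCLM

private lemma aux_combo {n : Type*} [Fintype n] {Ω : Type*} [MeasurableSpace Ω]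
    {μ : Measure Ω} (K : ℝ)
    {f g h : Ω → Matrix n n ℂ}
    (hf : Integrable f μ) (hg : Integrable g μ) (hh : Integrable h μ) :
    ∫ t, (K • f t - ((1:ℂ)/2) • (g t + h t)) ∂μ
      = K • (∫ t, f t ∂μ) - ((1:ℂ)/2) • ((∫ t, g t ∂μ) + (∫ t, h t ∂μ)) := by
  have hf' : Integrable (fun t => K • f t) μ := hf.smul K
  have hgh : Integrable (fun t => g t + h t) μ := hg.add hh
  have hgh' : Integrable (fun t => ((1:ℂ)/2) • (g t + h t)) μ := hgh.smul ((1:ℂ)/2)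
  rw [integral_sub hf' hgh', integral_smul, integral_smul, integral_add hg hh]

/-- Inequality (5.5): if `1 ∈ [a,b]`, then for any real `λ` and `α ∈ [-1,1]`,
`(∫ A_t^{λ+α} dμ) ⊗ₛ (∫ A_t^{λ-α} dμ) ≤ ((a²+b²)/(2ab)) (∫ A_t^{λ} dμ)^{⊗2}`. -/
theorem kantorovich_integral_tensor_rpow_shift {k : ℕ} {Ω : Type*} [MeasurableSpace Ω]
    (μ : Measure Ω) [IsFiniteMeasure μ] (a b : ℝ) (ha : 0 < a) (hab : a ≤ b)
    (h1 : 1 ∈ Set.Icc a b)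
    (A : Ω → Matrix (Fin k) (Fin k) ℂ) (hAmeas : AEStronglyMeasurable A μ)
    (hAherm : ∀ t, (A t).IsHermitian)
    (hAa : ∀ t, (A t - a • 1).PosSemidef)
    (hAb : ∀ t, ((b • 1 : Matrix (Fin k) (Fin k) ℂ) - A t).PosSemidef)
    (l α : ℝ) (hα : α ∈ Set.Icc (-1 : ℝ) 1) :
    (((a ^ 2 + b ^ 2) / (2 * a * b)) •
        ((∫ t, cfc (fun x : ℝ => x ^ l) (A t) ∂μ) ⊗ₖ (∫ t, cfc (fun x : ℝ => x ^ l) (A t) ∂μ))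
      - symKron (∫ t, cfc (fun x : ℝ => x ^ (l + α)) (A t) ∂μ)
          (∫ t, cfc (fun x : ℝ => x ^ (l - α)) (A t) ∂μ)).PosSemidef := by
  have heig : ∀ t i, (hAherm t).eigenvalues i ∈ Set.Icc a b := fun t i =>
    ⟨aux_eig_lower a (hAherm t) (hAa t) i, aux_eig_upper b (hAherm t) (hAb t) i⟩
  have hint : ∀ r : ℝ, Integrable (fun t => cfc (fun x : ℝ => x ^ r) (A t)) μ := fun r =>
    aux_integrable_cfc_rpow a b r ha hab hAmeas hAherm heig
  set K : ℝ := (a ^ 2 + b ^ 2) / (2 * a * b) with hK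
  set P : ℝ → Ω → Matrix (Fin k) (Fin k) ℂ :=
    fun r t => cfc (fun x : ℝ => x ^ r) (A t) with hP
  set Il : Matrix (Fin k) (Fin k) ℂ := ∫ t, P l t ∂μ with hIl
  set Ip : Matrix (Fin k) (Fin k) ℂ := ∫ t, P (l + α) t ∂μ with hIp
  set Im : Matrix (Fin k) (Fin k) ℂ := ∫ t, P (l - α) t ∂μ with hIm
  -- the inner (in `s`) integrand and its PSD property
  have hGt : ∀ t, (K • (P l t ⊗ₖ Il) -
      ((1:ℂ)/2) • (P (l + α) t ⊗ₖ Im + P (l - α) t ⊗ₖ Ip)).PosSemidef := by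
    intro t
    have if1 : Integrable (fun s => P l t ⊗ₖ P l s) μ :=
      aux_integrable_kronL (hint l) (P l t)
    have if2 : Integrable (fun s => P (l + α) t ⊗ₖ P (l - α) s) μ :=
      aux_integrable_kronL (hint (l - α)) (P (l + α) t)
    have if3 : Integrable (fun s => P (l - α) t ⊗ₖ P (l + α) s) μ :=
      aux_integrable_kronL (hint (l + α)) (P (l - α) t)
    have ek1 : (∫ s, P l t ⊗ₖ P l s ∂μ) = P l t ⊗ₖ Il :=
      aux_integral_kronL (hint l) (P l t)
    have ek2 : (∫ s, P (l + α) t ⊗ₖ P (l - α) s ∂μ) = P (l + α) t ⊗ₖ Im :=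
      aux_integral_kronL (hint (l - α)) (P (l + α) t)
    have ek3 : (∫ s, P (l - α) t ⊗ₖ P (l + α) s ∂μ) = P (l - α) t ⊗ₖ Ip :=
      aux_integral_kronL (hint (l + α)) (P (l - α) t)
    have hFint : Integrable (fun s => K • (P l t ⊗ₖ P l s) -
        ((1:ℂ)/2) • (P (l + α) t ⊗ₖ P (l - α) s + P (l - α) t ⊗ₖ P (l + α) s)) μ :=
      (if1.smul K).sub ((if2.add if3).smul ((1:ℂ)/2))
    have hexp : (K • (P l t ⊗ₖ Il) -
        ((1:ℂ)/2) • (P (l + α) t ⊗ₖ Im + P (l - α) t ⊗ₖ Ip))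
        = ∫ s, (K • (P l t ⊗ₖ P l s) -
          ((1:ℂ)/2) • (P (l + α) t ⊗ₖ P (l - α) s + P (l - α) t ⊗ₖ P (l + α) s)) ∂μ := by
      rw [aux_combo K if1 if2 if3, ek1, ek2, ek3]
    rw [hexp]
    apply aux_posSemidef_integral hFint
    intro s
    exact aux_pointwise_psd a b l α ha hab hα (hAherm t) (hAherm s) (heig t) (heig s)
  -- outer integral
  have ig1 : Integrable (fun t => P l t ⊗ₖ Il) μ := aux_integrable_kronR (hint l) Il
  have ig2 : Integrable (fun t => P (l + α) t ⊗ₖ Im) μ := aux_integrable_kronR (hint (l + α)) Im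
  have ig3 : Integrable (fun t => P (l - α) t ⊗ₖ Ip) μ := aux_integrable_kronR (hint (l - α)) Ip
  have eg1 : (∫ t, P l t ⊗ₖ Il ∂μ) = Il ⊗ₖ Il := aux_integral_kronR (hint l) Il
  have eg2 : (∫ t, P (l + α) t ⊗ₖ Im ∂μ) = Ip ⊗ₖ Im := aux_integral_kronR (hint (l + α)) Im
  have eg3 : (∫ t, P (l - α) t ⊗ₖ Ip ∂μ) = Im ⊗ₖ Ip := aux_integral_kronR (hint (l - α)) Ip
  have hGint : Integrable (fun t => K • (P l t ⊗ₖ Il) -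
      ((1:ℂ)/2) • (P (l + α) t ⊗ₖ Im + P (l - α) t ⊗ₖ Ip)) μ :=
    (ig1.smul K).sub ((ig2.add ig3).smul ((1:ℂ)/2))
  have hmain : (K • (Il ⊗ₖ Il) - symKron Ip Im)
      = ∫ t, (K • (P l t ⊗ₖ Il) -
          ((1:ℂ)/2) • (P (l + α) t ⊗ₖ Im + P (l - α) t ⊗ₖ Ip)) ∂μ := by
    rw [aux_combo K ig1 ig2 ig3, eg1, eg2, eg3, symKron]
  rw [show (((a ^ 2 + b ^ 2) / (2 * a * b)) •
        ((∫ t, cfc (fun x : ℝ => x ^ l) (A t) ∂μ) ⊗ₖ (∫ t, cfc (fun x : ℝ => x ^ l) (A t) ∂μ))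
      - symKron (∫ t, cfc (fun x : ℝ => x ^ (l + α)) (A t) ∂μ)
          (∫ t, cfc (fun x : ℝ => x ^ (l - α)) (A t) ∂μ))
      = (K • (Il ⊗ₖ Il) - symKron Ip Im) from rfl, hmain]
  exact aux_posSemidef_integral hGint hGt
end

section
/- Let a₁, …, aₙ and w₁, …, wₙ be real numbers such that 0 < a ≤ aᵢ ≤ b and wᵢ ≥ 0 for all 1 ≤ i ≤ n. Then (∑_{i=1}^n wᵢ aᵢ)·(∑_{i=1}^n wᵢ/aᵢ) ≤ ((a + b)²/(4ab))·(∑_{i=1}^n wᵢ)². (This is the classical Kantorovich inequality, a reverse weighted arithmetic–harmonic mean inequality.) -/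
/-- The classical Kantorovich inequality: for `0 < a ≤ b`, `x i ∈ [a, b]` and weights
`w i ≥ 0`, `(∑ wᵢ xᵢ)(∑ wᵢ/xᵢ) ≤ ((a+b)²/(4ab)) (∑ wᵢ)²`. -/
theorem classical_kantorovich (n : ℕ) (a b : ℝ) (ha : 0 < a) (hab : a ≤ b)
    (x w : Fin n → ℝ) (hx : ∀ i, x i ∈ Set.Icc a b) (hw : ∀ i, 0 ≤ w i) :
    (∑ i, w i * x i) * (∑ i, w i / x i) ≤ (a + b) ^ 2 / (4 * a * b) * (∑ i, w i) ^ 2 := by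
  have hb : 0 < b := ha.trans_le hab
  have hab' : 0 < a * b := mul_pos ha hb
  have key : ∀ i, w i / x i ≤ ((a + b) * w i - w i * x i) / (a * b) := by
    intro i
    obtain ⟨h1, h2⟩ := hx i
    have hxi : 0 < x i := ha.trans_le h1
    rw [div_le_div_iff₀ hxi hab']
    nlinarith [mul_nonneg (hw i) (mul_nonneg (sub_nonneg.2 h1) (sub_nonneg.2 h2))]
  have hS2 : (∑ i, w i / x i) ≤ ((a + b) * (∑ i, w i) - (∑ i, w i * x i)) / (a * b) := by
    calc (∑ i, w i / x i) ≤ ∑ i, ((a + b) * w i - w i * x i) / (a * b) :=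
          Finset.sum_le_sum fun i _ => key i
      _ = ((a + b) * (∑ i, w i) - (∑ i, w i * x i)) / (a * b) := by
          rw [← Finset.sum_div, Finset.sum_sub_distrib, ← Finset.mul_sum]
  have hS1 : 0 ≤ ∑ i, w i * x i :=
    Finset.sum_nonneg fun i _ => mul_nonneg (hw i) (le_of_lt (ha.trans_le (hx i).1))
  set S1 := ∑ i, w i * x i
  set S2 := ∑ i, w i / x i
  set W := ∑ i, w i
  have h1 : S1 * S2 ≤ S1 * (((a + b) * W - S1) / (a * b)) :=
    mul_le_mul_of_nonneg_left hS2 hS1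
  have h2 : S2 * (a * b) ≤ (a + b) * W - S1 := (le_div_iff₀ hab').1 hS2
  rw [div_mul_eq_mul_div, le_div_iff₀ (by positivity : (0:ℝ) < 4 * a * b)]
  nlinarith [sq_nonneg ((a + b) * W - 2 * S1), mul_le_mul_of_nonneg_left h2 hS1]
end
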